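/- If m is a positive integer, then for every positive integer n > 14.4/(2^(1/m) − 1.5^(1/m))^m there exist a prime number r and a positive integer a such that n < r < 3n/2 < a^m < 2n (equivalently, 2n < 2r < 3n < 2a^m < 4n). -/

import Mathlib

open Finset ArithmeticFunction Real
open scoped NNReal

namespace NaguraAux

set_option maxHeartbeats 1600000


lemma log2_lb : (0.6931471803 : ℝ) < Real.log 2 := Real.log_two_gt_d9
lemma log2_ub : Real.log 2 < 0.6931471808 := Real.log_two_lt_d9

lemma log3_lb : (1.0985 : ℝ) < Real.log 3 := by
  have h : (2:ℝ)^(84:ℕ) < 3^(53:ℕ) := by norm_num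
  have h2 := Real.log_lt_log (by positivity) h
  rw [Real.log_pow, Real.log_pow] at h2
  push_cast at h2
  have := log2_lb
  nlinarith

lemma log3_ub : Real.log 3 < 1.0988 := by
  have h : (3:ℝ)^(94:ℕ) < 2^(149:ℕ) := by norm_num
  have h2 := Real.log_lt_log (by positivity) h
  rw [Real.log_pow, Real.log_pow] at h2
  push_cast at h2
  have := log2_ub
  nlinarith

lemma log5_lb : (1.6093 : ℝ) < Real.log 5 := by
  have h : (2:ℝ)^(202:ℕ) < 5^(87:ℕ) := by norm_num
  have h2 := Real.log_lt_log (by positivity) h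
  rw [Real.log_pow, Real.log_pow] at h2
  push_cast at h2
  have := log2_lb
  nlinarith

lemma log5_ub : Real.log 5 < 1.6099 := by
  have h : (5:ℝ)^(31:ℕ) < 2^(72:ℕ) := by norm_num
  have h2 := Real.log_lt_log (by positivity) h
  rw [Real.log_pow, Real.log_pow] at h2
  push_cast at h2
  have := log2_ub
  nlinarith

-- A = (7/15) log 2 + (3/10) log 3 + (1/6) log 5, the Chebyshev constant
noncomputable def A : ℝ := (7/15) * Real.log 2 + (3/10) * Real.log 3 + (1/6) * Real.log 5

lemma A_lb : (0.9212 : ℝ) ≤ A := by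
  have := log2_lb; have := log3_lb; have := log5_lb
  unfold A; nlinarith

lemma A_ub : A ≤ 0.9215 := by
  have := log2_ub; have := log3_ub; have := log5_ub
  unfold A; nlinarith

-- A equals the alternating combination
lemma A_eq : A = Real.log 2 / 2 + Real.log 3 / 3 + Real.log 5 / 5 - Real.log 30 / 30 := by
  have h30 : (30:ℝ) = 2 * 3 * 5 := by norm_num
  rw [h30, Real.log_mul (by norm_num) (by norm_num), Real.log_mul (by norm_num) (by norm_num)]
  unfold A; ring



noncomputable def T (N : ℕ) : ℝ := ∑ d ∈ Finset.Ioc 0 N, Real.log d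
noncomputable def psi (N : ℕ) : ℝ := ∑ d ∈ Finset.Ioc 0 N, Λ d
noncomputable def theta (N : ℕ) : ℝ := ∑ d ∈ (Finset.Ioc 0 N).filter Nat.Prime, Λ d
noncomputable def f (x : ℝ) : ℝ := x * Real.log x - x

lemma f_diff_le {x y : ℝ} (hx : 0 < x) (hxy : x ≤ y) : f y - f x ≤ (y - x) * Real.log y := by
  have hy : 0 < y := lt_of_lt_of_le hx hxy
  have h1 : Real.log (y/x) ≤ y/x - 1 := Real.log_le_sub_one_of_pos (by positivity)
  rw [Real.log_div (ne_of_gt hy) (ne_of_gt hx)] at h1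
  have h2 := mul_le_mul_of_nonneg_left h1 hx.le
  have h3 : x * (y/x - 1) = y - x := by field_simp
  unfold f; nlinarith
lemma f_diff_ge {x y : ℝ} (hx : 0 < x) (hxy : x ≤ y) : (y - x) * Real.log x ≤ f y - f x := by
  have hy : 0 < y := lt_of_lt_of_le hx hxy
  have h1 : Real.log (x/y) ≤ x/y - 1 := Real.log_le_sub_one_of_pos (by positivity)
  rw [Real.log_div (ne_of_gt hx) (ne_of_gt hy)] at h1
  have h2 := mul_le_mul_of_nonneg_left h1 hy.le
  have h3 : y * (x/y - 1) = x - y := by field_simp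
  unfold f; nlinarith
lemma f_mono {x y : ℝ} (hx : 1 ≤ x) (hxy : x ≤ y) : f x ≤ f y := by
  have := f_diff_ge (lt_of_lt_of_le zero_lt_one hx) hxy
  have h2 : 0 ≤ (y - x) * Real.log x :=
    mul_nonneg (by linarith) (Real.log_nonneg hx)
  linarith

lemma T_succ (N : ℕ) : T (N+1) = T N + Real.log (N+1) := by
  unfold T
  rw [Finset.sum_Ioc_succ_top (Nat.zero_le _)]
  push_cast
  ring

lemma T_lb {N : ℕ} (h : 1 ≤ N) : f N + 1 ≤ T N := by
  induction N, h using Nat.le_induction with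
  | base => simp [T, f]
  | succ n hn ih =>
    have hd := f_diff_le (x := (n:ℝ)) (y := (n+1:ℝ)) (by exact_mod_cast hn) (by linarith)
    rw [T_succ]; push_cast; push_cast at ih hd; nlinarith

lemma T_ub {N : ℕ} (h : 1 ≤ N) : T N ≤ f N + 1 + Real.log N := by
  induction N, h using Nat.le_induction with
  | base => simp [T, f]
  | succ n hn ih =>
    have hn' : (1:ℝ) ≤ (n:ℝ) := by exact_mod_cast hn
    have hd := f_diff_ge (x := (n:ℝ)) (y := (n+1:ℝ)) (by linarith) (by linarith)
    have hlog : Real.log n ≤ Real.log (n+1) := Real.log_le_log (by linarith) (by linarith)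
    rw [T_succ]; push_cast; push_cast at ih hd; nlinarith

lemma psi_le_T (N : ℕ) : psi N ≤ T N :=
  Finset.sum_le_sum (fun d _ => vonMangoldt_le_log)

lemma psi_nonneg (N : ℕ) : 0 ≤ psi N :=
  Finset.sum_nonneg (fun d _ => vonMangoldt_nonneg)

lemma theta_le_psi (N : ℕ) : theta N ≤ psi N :=
  Finset.sum_le_sum_of_subset_of_nonneg (Finset.filter_subset _ _)
    (fun d _ _ => vonMangoldt_nonneg)

lemma psi_mono {M N : ℕ} (h : M ≤ N) : psi M ≤ psi N :=
  Finset.sum_le_sum_of_subset_of_nonneg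
    (Finset.Ioc_subset_Ioc le_rfl h) (fun d _ _ => vonMangoldt_nonneg)

-- divisor swap
lemma T_eq (N : ℕ) : T N = ∑ d ∈ Finset.Ioc 0 N, Λ d * ((N / d : ℕ) : ℝ) := by
  unfold T
  have h1 : ∀ n ∈ Finset.Ioc 0 N, Real.log n = ∑ d ∈ (Finset.Ioc 0 N).filter (· ∣ n), Λ d := by
    intro n hn
    rw [Finset.mem_Ioc] at hn
    rw [← vonMangoldt_sum]
    apply Finset.sum_congr _ (fun _ _ => rfl)
    ext d
    simp only [Nat.mem_divisors, Finset.mem_filter, Finset.mem_Ioc]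
    constructor
    · rintro ⟨hd, hne⟩
      exact ⟨⟨Nat.pos_of_dvd_of_pos hd hn.1, le_trans (Nat.le_of_dvd hn.1 hd) hn.2⟩, hd⟩
    · rintro ⟨_, hd⟩
      exact ⟨hd, by omega⟩
  rw [Finset.sum_congr rfl h1]
  calc ∑ n ∈ Finset.Ioc 0 N, ∑ d ∈ (Finset.Ioc 0 N).filter (· ∣ n), Λ d
      = ∑ n ∈ Finset.Ioc 0 N, ∑ d ∈ Finset.Ioc 0 N, if d ∣ n then Λ d else 0 := by
        simp [Finset.sum_filter]
    _ = ∑ d ∈ Finset.Ioc 0 N, ∑ n ∈ Finset.Ioc 0 N, if d ∣ n then Λ d else 0 :=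
        Finset.sum_comm
    _ = ∑ d ∈ Finset.Ioc 0 N, Λ d * ((N / d : ℕ) : ℝ) := by
        refine Finset.sum_congr rfl (fun d hd => ?_)
        rw [← Finset.sum_filter, Finset.sum_const, Nat.Ioc_filter_dvd_card_eq_div,
          nsmul_eq_mul, mul_comm]



noncomputable def E (N : ℕ) : ℝ := T N - T (N/2) - T (N/3) - T (N/5) + T (N/30)

def h (t : ℕ) : ℤ := (t:ℤ) - ((t/2 : ℕ) : ℤ) - ((t/3 : ℕ) : ℤ) - ((t/5 : ℕ) : ℤ) + ((t/30 : ℕ) : ℤ)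

lemma h_nonneg (t : ℕ) : 0 ≤ h t := by unfold h; omega
lemma h_le_one (t : ℕ) : h t ≤ 1 := by unfold h; omega
lemma h_eq_one {t : ℕ} (h1 : 1 ≤ t) (h5 : t ≤ 5) : h t = 1 := by unfold h; omega

lemma T_div (N k : ℕ) (hk : 0 < k) :
    T (N/k) = ∑ d ∈ Finset.Ioc 0 N, Λ d * ((N / d / k : ℕ) : ℝ) := by
  rw [T_eq]
  rw [Finset.sum_subset (Finset.Ioc_subset_Ioc le_rfl (Nat.div_le_self N k))]
  · apply Finset.sum_congr rfl
    intro d hd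
    rw [Nat.div_div_eq_div_mul, Nat.div_div_eq_div_mul, mul_comm k d]
  · intro d hd hnd
    simp only [Finset.mem_Ioc] at hd hnd
    have : N / k < d := by omega
    have : N / k / d = 0 := Nat.div_eq_of_lt (by omega)
    rw [this]; simp

lemma E_eq (N : ℕ) : E N = ∑ d ∈ Finset.Ioc 0 N, Λ d * ((h (N/d) : ℤ) : ℝ) := by
  unfold E
  rw [T_eq, T_div N 2 (by norm_num), T_div N 3 (by norm_num), T_div N 5 (by norm_num),
    T_div N 30 (by norm_num)]
  rw [← Finset.sum_sub_distrib, ← Finset.sum_sub_distrib, ← Finset.sum_sub_distrib,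
    ← Finset.sum_add_distrib]
  apply Finset.sum_congr rfl
  intro d hd
  unfold h
  simp only [Int.cast_sub, Int.cast_add, Int.cast_natCast]
  ring

lemma E_le_psi (N : ℕ) : E N ≤ psi N := by
  rw [E_eq]
  apply Finset.sum_le_sum
  intro d hd
  have h1 : ((h (N/d) : ℤ) : ℝ) ≤ 1 := by exact_mod_cast h_le_one (N/d)
  nlinarith [vonMangoldt_nonneg (n := d)]

lemma psi_sub_psi_le_E (N : ℕ) : psi N - psi (N/6) ≤ E N := by
  have hsplit : psi (N/6) + ∑ d ∈ Finset.Ioc (N/6) N, Λ d = psi N := by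
    unfold psi
    exact Finset.sum_Ioc_consecutive _ (Nat.zero_le _) (Nat.div_le_self N 6)
  have hE : E N = ∑ d ∈ Finset.Ioc 0 (N/6), Λ d * ((h (N/d) : ℤ) : ℝ)
      + ∑ d ∈ Finset.Ioc (N/6) N, Λ d * ((h (N/d) : ℤ) : ℝ) := by
    rw [E_eq, Finset.sum_Ioc_consecutive _ (Nat.zero_le _) (Nat.div_le_self N 6)]
  have h1 : 0 ≤ ∑ d ∈ Finset.Ioc 0 (N/6), Λ d * ((h (N/d) : ℤ) : ℝ) := by
    apply Finset.sum_nonneg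
    intro d hd
    have : (0:ℝ) ≤ ((h (N/d) : ℤ) : ℝ) := by exact_mod_cast h_nonneg (N/d)
    exact mul_nonneg vonMangoldt_nonneg this
  have h2 : ∑ d ∈ Finset.Ioc (N/6) N, Λ d ≤ ∑ d ∈ Finset.Ioc (N/6) N, Λ d * ((h (N/d) : ℤ) : ℝ) := by
    apply Finset.sum_le_sum
    intro d hd
    simp only [Finset.mem_Ioc] at hd
    have hd0 : 0 < d := by omega
    have hub : N / d ≤ 5 := by
      rw [Nat.div_le_iff_le_mul_add_pred (by omega)]
      omega
    have hlb : 1 ≤ N / d := (Nat.one_le_div_iff hd0).mpr hd.2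
    rw [h_eq_one hlb hub]
    simp
  linarith



lemma f_comb {x : ℝ} (hx : 0 < x) :
    f x - f (x/2) - f (x/3) - f (x/5) + f (x/30) = A * x := by
  unfold f
  rw [A_eq, Real.log_div (ne_of_gt hx) (by norm_num), Real.log_div (ne_of_gt hx) (by norm_num),
    Real.log_div (ne_of_gt hx) (by norm_num), Real.log_div (ne_of_gt hx) (by norm_num)]
  ring

lemma nat_div_dist {N k : ℕ} (hk : 0 < k) :
    (N:ℝ)/k - ((N/k : ℕ) : ℝ) ≤ 1 := by
  have h1 : N < (N/k + 1) * k := (Nat.div_lt_iff_lt_mul hk).mp (Nat.lt_succ_self _)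
  have h2 : (N:ℝ) < ((N/k : ℕ) + 1) * k := by exact_mod_cast h1
  have hk' : (0:ℝ) < k := by exact_mod_cast hk
  rw [div_sub' (ne_of_gt hk'), div_le_one hk']
  nlinarith

lemma Tdiv_ub {N k : ℕ} (h1 : 1 ≤ N/k) (hkN : k ≤ N) :
    T (N/k) ≤ f ((N:ℝ)/k) + 1 + Real.log N := by
  have hc1 : (1:ℝ) ≤ ((N/k : ℕ) : ℝ) := by exact_mod_cast h1
  have hc2 : ((N/k : ℕ) : ℝ) ≤ (N:ℝ)/k := Nat.cast_div_le
  have hc3 : ((N/k : ℕ) : ℝ) ≤ (N:ℝ) := by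
    exact_mod_cast Nat.div_le_self N k
  have := T_ub h1
  have hfm := f_mono hc1 hc2
  have hlog : Real.log ((N/k : ℕ) : ℝ) ≤ Real.log N := Real.log_le_log (by linarith) hc3
  linarith

lemma Tdiv_lb {N k : ℕ} (hk : 0 < k) (h1 : 1 ≤ N/k) :
    f ((N:ℝ)/k) - Real.log N + 1 ≤ T (N/k) := by
  have hc1 : (1:ℝ) ≤ ((N/k : ℕ) : ℝ) := by exact_mod_cast h1
  have hc2 : ((N/k : ℕ) : ℝ) ≤ (N:ℝ)/k := Nat.cast_div_le
  have hc3 : (N:ℝ)/k ≤ (N:ℝ) := by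
    apply div_le_self (by positivity) (by exact_mod_cast hk)
  have hd := f_diff_le (x := ((N/k : ℕ) : ℝ)) (y := (N:ℝ)/k) (by linarith) hc2
  have hdist := nat_div_dist (N := N) hk
  have hlog1 : Real.log ((N:ℝ)/k) ≤ Real.log N := Real.log_le_log (by linarith) hc3
  have hlog0 : 0 ≤ Real.log ((N:ℝ)/k) := Real.log_nonneg (by linarith)
  have := T_lb h1
  nlinarith [mul_le_mul_of_nonneg_right hdist hlog0]

lemma E_lb {N : ℕ} (hN : 30 ≤ N) : A * N - 4 * Real.log N - 1 ≤ E N := by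
  have hN1 : (30:ℝ) ≤ (N:ℝ) := by exact_mod_cast hN
  have hTN := T_lb (by omega : 1 ≤ N)
  have h2 := Tdiv_ub (N := N) (k := 2) (by omega) (by omega)
  have h3 := Tdiv_ub (N := N) (k := 3) (by omega) (by omega)
  have h5 := Tdiv_ub (N := N) (k := 5) (by omega) (by omega)
  have h30 := Tdiv_lb (N := N) (k := 30) (by norm_num) (by omega)
  have hcomb := f_comb (x := (N:ℝ)) (by linarith)
  unfold E
  linarith

lemma E_ub {N : ℕ} (hN : 30 ≤ N) : E N ≤ A * N + 5 * Real.log N := by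
  have hN1 : (30:ℝ) ≤ (N:ℝ) := by exact_mod_cast hN
  have hTN := T_ub (by omega : 1 ≤ N)
  have h2 := Tdiv_lb (N := N) (k := 2) (by norm_num) (by omega)
  have h3 := Tdiv_lb (N := N) (k := 3) (by norm_num) (by omega)
  have h5 := Tdiv_lb (N := N) (k := 5) (by norm_num) (by omega)
  have h30 := Tdiv_ub (N := N) (k := 30) (by omega) (by omega)
  have hcomb := f_comb (x := (N:ℝ)) (by linarith)
  unfold E
  linarith



lemma log_le_rt8 {x : ℝ} (hx : 1 ≤ x) :
    Real.log x ≤ 8 * (Real.sqrt (Real.sqrt (Real.sqrt x)) - 1) := by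
  have h0 : (0:ℝ) ≤ x := by linarith
  have h1 : (0:ℝ) ≤ Real.sqrt x := Real.sqrt_nonneg _
  have h2 : (0:ℝ) ≤ Real.sqrt (Real.sqrt x) := Real.sqrt_nonneg _
  have e1 : Real.log (Real.sqrt x) = Real.log x / 2 := Real.log_sqrt h0
  have e2 : Real.log (Real.sqrt (Real.sqrt x)) = Real.log x / 4 := by
    rw [Real.log_sqrt h1, e1]; ring
  have e3 : Real.log (Real.sqrt (Real.sqrt (Real.sqrt x))) = Real.log x / 8 := by
    rw [Real.log_sqrt h2, e2]; ring
  have h4 := Real.log_le_sub_one_of_pos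
    (show (0:ℝ) < Real.sqrt (Real.sqrt (Real.sqrt x)) by
      apply Real.sqrt_pos.mpr; apply Real.sqrt_pos.mpr; apply Real.sqrt_pos.mpr; linarith)
  rw [e3] at h4
  linarith

lemma rt8_pow {x : ℝ} (hx : 0 ≤ x) :
    (Real.sqrt (Real.sqrt (Real.sqrt x)))^8 = x := by
  have h1 : (0:ℝ) ≤ Real.sqrt x := Real.sqrt_nonneg _
  have h2 : (0:ℝ) ≤ Real.sqrt (Real.sqrt x) := Real.sqrt_nonneg _
  have e1 : (Real.sqrt (Real.sqrt (Real.sqrt x)))^2 = Real.sqrt (Real.sqrt x) :=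
    Real.sq_sqrt h2
  have e2 : (Real.sqrt (Real.sqrt x))^2 = Real.sqrt x := Real.sq_sqrt h1
  have e3 : (Real.sqrt x)^2 = x := Real.sq_sqrt hx
  calc (Real.sqrt (Real.sqrt (Real.sqrt x)))^8
      = (((Real.sqrt (Real.sqrt (Real.sqrt x)))^2)^2)^2 := by ring
    _ = x := by rw [e1, e2, e3]

lemma step_num {x : ℝ} (hx : 1 ≤ x) : 5 * Real.log x ≤ 0.0018 * x + 134 := by
  set s := Real.sqrt (Real.sqrt (Real.sqrt x)) with hs
  have hs1 : 1 ≤ s := by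
    rw [hs]
    rw [show (1:ℝ) = Real.sqrt (Real.sqrt (Real.sqrt 1)) by simp]
    apply Real.sqrt_le_sqrt; apply Real.sqrt_le_sqrt; apply Real.sqrt_le_sqrt; linarith
  have hp : s^8 = x := rt8_pow (by linarith)
  have hl : Real.log x ≤ 8 * (s - 1) := log_le_rt8 hx
  have key : 40 * s ≤ 0.0018 * s^8 + 174 := by
    rcases le_or_gt s 4.35 with h | h
    · nlinarith [pow_nonneg (by linarith : (0:ℝ) ≤ s) 8]
    · have h7 : (4.35:ℝ)^7 ≤ s^7 := by
        apply pow_le_pow_left₀ (by norm_num) (by linarith)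
      have : s^8 = s^7 * s := by ring
      nlinarith [pow_pos (by linarith : (0:ℝ) < s) 7]
  linarith [hp ▸ key, hl]

lemma psi_ub : ∀ N : ℕ, psi N ≤ 1.108 * N + 75 * (Real.log N + 1) := by
  intro N
  induction N using Nat.strong_induction_on with
  | _ N ih =>
    rcases le_or_gt N 29 with hN | hN
    · rcases Nat.eq_zero_or_pos N with h0 | h0
      · subst h0
        have hp0 : psi 0 = 0 := by simp [psi]
        rw [hp0]
        norm_num
      · have h1 : (1:ℝ) ≤ (N:ℝ) := by exact_mod_cast h0
        have h29 : (N:ℝ) ≤ 29 := by exact_mod_cast hN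
        have hlog : 0 ≤ Real.log N := Real.log_nonneg h1
        have := psi_le_T N
        have := T_ub h0
        have hf : f N ≤ 29 * Real.log N - N := by
          unfold f
          nlinarith
        nlinarith
    · -- N ≥ 30
      have h6 : N / 6 < N := Nat.div_lt_self (by omega) (by omega)
      have ih6 := ih (N/6) h6
      have hEs := psi_sub_psi_le_E N
      have hEub := E_ub (by omega : 30 ≤ N)
      have hc1 : ((N/6 : ℕ) : ℝ) ≤ (N:ℝ)/6 := Nat.cast_div_le
      have hc2 : (1:ℝ) ≤ ((N/6 : ℕ) : ℝ) := by
        have : 1 ≤ N/6 := by omega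
        exact_mod_cast this
      have hlog6 : Real.log ((N/6 : ℕ) : ℝ) ≤ Real.log N - Real.log 6 := by
        have := Real.log_le_log (by linarith) hc1
        rw [Real.log_div (by positivity) (by norm_num)] at this
        linarith
      have hlog6v : (1.7916:ℝ) ≤ Real.log 6 := by
        have : Real.log 6 = Real.log 2 + Real.log 3 := by
          rw [show (6:ℝ) = 2 * 3 by norm_num, Real.log_mul (by norm_num) (by norm_num)]
        rw [this]
        linarith [log2_lb, log3_lb]
      have hNr : (30:ℝ) ≤ (N:ℝ) := by exact_mod_cast hN
      have hstep := step_num (x := (N:ℝ)) (by linarith)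
      have hA := A_ub
      nlinarith


lemma psi_sub_theta (K : ℕ) :
    psi K - theta K ≤ (Nat.log 2 K : ℝ) * psi (Nat.sqrt K) := by
  classical
  set L := Nat.log 2 K with hL
  set P := (Finset.Ioc 0 (Nat.sqrt K)).filter Nat.Prime with hP
  set Kk := Finset.Icc 2 L with hKk
  have hsplit : theta K + ∑ d ∈ (Finset.Ioc 0 K).filter (fun n => ¬ n.Prime), Λ d = psi K := by
    unfold psi theta
    exact Finset.sum_filter_add_sum_filter_not _ _ _
  have hmain : ∑ d ∈ (Finset.Ioc 0 K).filter (fun n => ¬ n.Prime), Λ d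
      ≤ (L : ℝ) * psi (Nat.sqrt K) := by
    have hre : ∑ d ∈ (Finset.Ioc 0 K).filter (fun n => ¬ n.Prime), Λ d
        = ∑ d ∈ ((Finset.Ioc 0 K).filter (fun n => ¬ n.Prime)).filter (fun n => Λ n ≠ 0), Λ d :=
      (Finset.sum_filter_ne_zero _).symm
    rw [hre]
    have hsub : ((Finset.Ioc 0 K).filter (fun n => ¬ n.Prime)).filter (fun n => Λ n ≠ 0)
        ⊆ (P ×ˢ Kk).image (fun pk : ℕ × ℕ => pk.1 ^ pk.2) := by
      intro n hn
      simp only [Finset.mem_filter, Finset.mem_Ioc] at hn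
      obtain ⟨⟨⟨hn0, hnK⟩, hnp⟩, hΛ⟩ := hn
      have hpp : IsPrimePow n := vonMangoldt_ne_zero_iff.mp hΛ
      obtain ⟨p, k, hp, hk, rfl⟩ := hpp
      have hpN : p.Prime := Nat.prime_iff.mpr hp
      have hk2 : 2 ≤ k := by
        rcases Nat.lt_or_ge k 2 with h | h
        · exfalso
          have hk1 : k = 1 := by omega
          rw [hk1, pow_one] at hnp
          exact hnp hpN
        · exact h
      have hp2 : 2 ≤ p := hpN.two_le
      have hpsq : p * p ≤ K := by
        calc p * p = p ^ 2 := by ring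
          _ ≤ p ^ k := Nat.pow_le_pow_right (by omega) hk2
          _ ≤ K := hnK
      have hpsqrt : p ≤ Nat.sqrt K := Nat.le_sqrt.mpr hpsq
      have hkL : k ≤ L := by
        rw [hL]
        apply (Nat.le_log_iff_pow_le (by norm_num) (by omega)).mpr
        calc 2 ^ k ≤ p ^ k := Nat.pow_le_pow_left hp2 k
          _ ≤ K := hnK
      apply Finset.mem_image.mpr
      refine ⟨(p, k), ?_, rfl⟩
      apply Finset.mem_product.mpr
      constructor
      · simp only [hP, Finset.mem_filter, Finset.mem_Ioc]
        exact ⟨⟨by omega, hpsqrt⟩, hpN⟩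
      · simp only [hKk, Finset.mem_Icc]; exact ⟨hk2, hkL⟩
    have h1 : ∑ d ∈ ((Finset.Ioc 0 K).filter (fun n => ¬ n.Prime)).filter (fun n => Λ n ≠ 0), Λ d
        ≤ ∑ d ∈ (P ×ˢ Kk).image (fun pk : ℕ × ℕ => pk.1 ^ pk.2), Λ d :=
      Finset.sum_le_sum_of_subset_of_nonneg hsub (fun _ _ _ => vonMangoldt_nonneg)
    have hinj : ∀ x ∈ P ×ˢ Kk, ∀ y ∈ P ×ˢ Kk,
        (fun pk : ℕ × ℕ => pk.1 ^ pk.2) x = (fun pk : ℕ × ℕ => pk.1 ^ pk.2) y → x = y := by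
      rintro ⟨p, k⟩ hpk ⟨q, l⟩ hql hpq
      simp only [Finset.mem_product, hP, hKk,
        Finset.mem_filter, Finset.mem_Ioc, Finset.mem_Icc] at hpk hql
      obtain ⟨⟨_, hpprime⟩, hk2, _⟩ := hpk
      obtain ⟨⟨_, hqprime⟩, hl2, _⟩ := hql
      simp only at hpq
      have hpq' : p = q := by
        have hdvd : p ∣ q ^ l := by rw [← hpq]; exact dvd_pow_self p (by omega)
        have := hpprime.dvd_of_dvd_pow hdvd
        exact ((Nat.prime_dvd_prime_iff_eq hpprime hqprime).mp this)
      subst hpq'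
      have : k = l := Nat.pow_right_injective hpprime.two_le hpq
      simp [this]
    have h2 : ∑ d ∈ (P ×ˢ Kk).image (fun pk : ℕ × ℕ => pk.1 ^ pk.2), Λ d
        = ∑ pk ∈ P ×ˢ Kk, Λ (pk.1 ^ pk.2) := Finset.sum_image hinj
    have h3 : ∑ pk ∈ P ×ˢ Kk, Λ (pk.1 ^ pk.2) = ∑ p ∈ P, ∑ k ∈ Kk, Λ (p ^ k) := by
      rw [Finset.sum_product]
    have h4 : ∀ p ∈ P, ∑ k ∈ Kk, Λ (p ^ k) = (Kk.card : ℝ) * Λ p := by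
      intro p hp
      have hcg : ∀ k ∈ Kk, Λ (p ^ k) = Λ p := by
        intro k hk
        simp only [hKk, Finset.mem_Icc] at hk
        exact vonMangoldt_apply_pow (by omega)
      rw [Finset.sum_congr rfl hcg, Finset.sum_const, nsmul_eq_mul]
    have h5 : (Kk.card : ℝ) ≤ (L : ℝ) := by
      simp only [hKk, Nat.card_Icc]
      have : L + 1 - 2 ≤ L := by omega
      exact_mod_cast this
    have h6 : ∑ p ∈ P, Λ p ≤ psi (Nat.sqrt K) := by
      unfold psi
      exact Finset.sum_le_sum_of_subset_of_nonneg (Finset.filter_subset _ _)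
        (fun _ _ _ => vonMangoldt_nonneg)
    have h7 : 0 ≤ ∑ p ∈ P, Λ p := Finset.sum_nonneg (fun _ _ => vonMangoldt_nonneg)
    calc ∑ d ∈ ((Finset.Ioc 0 K).filter (fun n => ¬ n.Prime)).filter (fun n => Λ n ≠ 0), Λ d
        ≤ ∑ pk ∈ P ×ˢ Kk, Λ (pk.1 ^ pk.2) := by rw [← h2]; exact h1
      _ = ∑ p ∈ P, (Kk.card : ℝ) * Λ p := by
          rw [h3]; exact Finset.sum_congr rfl h4
      _ = (Kk.card : ℝ) * ∑ p ∈ P, Λ p := by rw [Finset.mul_sum]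
      _ ≤ (L : ℝ) * psi (Nat.sqrt K) := by
          apply mul_le_mul h5 h6 h7
          exact_mod_cast Nat.zero_le L
  linarith

set_option maxHeartbeats 1600000

lemma final_num {s u : ℝ} (hs : 17.78 ≤ s) (hu0 : 0 ≤ u) (hu : u ≤ 7.0904 + 0.25*s) :
    79*u + 79.55 + 1.4428 * (u + 0.406) * (1.108 * (1.2249 * s^2) + 75 * ((u + 0.406)/2 + 1))
      < 0.2738*s^4 := by
  nlinarith [sq_nonneg s, sq_nonneg (s - 17.78), sq_nonneg (s*s - 17.78*s),
    mul_pos (by linarith : (0:ℝ) < s) (by linarith : (0:ℝ) < s),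
    sq_nonneg (s*s - 60*s), sq_nonneg u, mul_nonneg hu0 (by linarith : (0:ℝ) ≤ s)]

lemma log_onehalf_ub : Real.log 1.5 ≤ 0.406 := by
  have h : Real.log 1.5 = Real.log 3 - Real.log 2 := by
    rw [show (1.5:ℝ) = 3/2 by norm_num, Real.log_div (by norm_num) (by norm_num)]
  rw [h]; linarith [log3_ub, log2_lb]

lemma exists_prime_large {N : ℕ} (hN : 100000 ≤ N) :
    ∃ p : ℕ, p.Prime ∧ N < p ∧ 2*p < 3*N := by
  by_contra hcon
  push_neg at hcon
  obtain ⟨K, hK⟩ : ∃ K, K = (3*N - 1)/2 := ⟨_, rfl⟩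
  have hNK : N < K := by omega
  have h2K : 2*K < 3*N := by omega
  have hK30 : 30 ≤ K := by omega
  have hKr : (1.5:ℝ) * N - 1 ≤ (K:ℝ) := by
    have h' : 3*N ≤ 2*K + 2 := by omega
    have hc : 3*(N:ℝ) ≤ 2*(K:ℝ) + 2 := by exact_mod_cast h'
    linarith
  have hKr2 : (K:ℝ) ≤ 1.5 * N := by
    have h' : 2*K ≤ 3*N := by omega
    have hc : 2*(K:ℝ) ≤ 3*(N:ℝ) := by exact_mod_cast h'
    linarith
  have hnop : ∀ p ∈ Finset.Ioc N K, ¬ p.Prime := by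
    intro p hp hprime
    rw [Finset.mem_Ioc] at hp
    have := hcon p hprime hp.1
    omega
  have htheta : theta K = theta N := by
    unfold theta
    rw [← Finset.Ioc_union_Ioc_eq_Ioc (Nat.zero_le N) (le_of_lt hNK), Finset.filter_union,
      Finset.sum_union]
    · have hemp : (Finset.Ioc N K).filter Nat.Prime = ∅ :=
        Finset.filter_eq_empty_iff.mpr hnop
      rw [hemp, Finset.sum_empty, add_zero]
    · apply Finset.disjoint_filter_filter
      rw [Finset.disjoint_left]
      intro a ha hb
      rw [Finset.mem_Ioc] at ha hb
      omega
  -- real setup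
  set s := Real.sqrt (Real.sqrt (N:ℝ)) with hsdef
  have hNr : (100000:ℝ) ≤ (N:ℝ) := by exact_mod_cast hN
  have hs0 : 0 ≤ s := Real.sqrt_nonneg _
  have hsqN : s^2 = Real.sqrt (N:ℝ) := Real.sq_sqrt (Real.sqrt_nonneg _)
  have hs4 : s^4 = (N:ℝ) := by
    have h2 : (Real.sqrt (N:ℝ))^2 = (N:ℝ) := Real.sq_sqrt (by positivity)
    calc s^4 = (s^2)^2 := by ring
      _ = (N:ℝ) := by rw [hsqN, h2]
  have hs : 17.78 ≤ s := by
    by_contra hlt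
    push_neg at hlt
    have h2 : s^2 < 17.78^2 := by nlinarith
    have h4 : s^4 < 100000 := by nlinarith [sq_nonneg s]
    rw [hs4] at h4
    linarith
  set u := Real.log (N:ℝ) with hu_def
  have hu0 : 0 ≤ u := Real.log_nonneg (by linarith)
  have hlog16 : Real.log 16 = 4 * Real.log 2 := by
    rw [show (16:ℝ) = 2^(4:ℕ) by norm_num, Real.log_pow]; push_cast; ring
  have hu : u ≤ 7.0904 + 0.25 * s := by
    have hlogs : u = 4 * Real.log s := by
      rw [hu_def, ← hs4, show s^4 = s^(4:ℕ) by norm_num, Real.log_pow]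
      push_cast; ring
    have hdiv : Real.log s ≤ Real.log 16 + (s/16 - 1) := by
      have h1 : Real.log (s/16) ≤ s/16 - 1 := Real.log_le_sub_one_of_pos (by positivity)
      have h2 : Real.log (s/16) = Real.log s - Real.log 16 :=
        Real.log_div (by positivity) (by norm_num)
      linarith
    rw [hlogs]
    rw [hlog16] at hdiv
    linarith [log2_ub, hdiv, hs0]
  -- log K ≤ u + 0.406
  have hKpos : (0:ℝ) < (K:ℝ) := by positivity
  have hlogK : Real.log K ≤ u + 0.406 := by
    have h1 : Real.log K ≤ Real.log (1.5 * N) := Real.log_le_log hKpos hKr2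
    rw [Real.log_mul (by norm_num) (by positivity)] at h1
    linarith [log_onehalf_ub]
  have hlogK0 : 0 ≤ Real.log K :=
    Real.log_nonneg (by exact_mod_cast Nat.one_le_iff_ne_zero.mpr (by omega))
  -- sqrt K ≤ 1.2249 s^2
  have hsqrtK : Real.sqrt (K:ℝ) ≤ 1.2249 * s^2 := by
    have h1 : Real.sqrt (K:ℝ) ≤ Real.sqrt ((1.2249 * s^2)^2) := by
      apply Real.sqrt_le_sqrt
      nlinarith [hs4, hKr2, sq_nonneg s]
    rwa [Real.sqrt_sq (by positivity)] at h1
  have hnsq : ((Nat.sqrt K : ℕ) : ℝ) ≤ Real.sqrt (K:ℝ) := Real.nat_sqrt_le_real_sqrt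
  have hnsq1 : (1:ℝ) ≤ ((Nat.sqrt K : ℕ) : ℝ) := by
    have h1 : 1 ≤ Nat.sqrt K := by
      have := Nat.sqrt_le_sqrt (show 1 ≤ K by omega)
      simpa using this
    exact_mod_cast h1
  have hlognsq : Real.log ((Nat.sqrt K : ℕ) : ℝ) ≤ Real.log K / 2 := by
    have h1 : Real.log ((Nat.sqrt K : ℕ) : ℝ) ≤ Real.log (Real.sqrt (K:ℝ)) :=
      Real.log_le_log (by linarith) hnsq
    rwa [Real.log_sqrt (le_of_lt hKpos)] at h1
  -- L bound
  obtain ⟨L, hLdef⟩ : ∃ L, L = Nat.log 2 K := ⟨_, rfl⟩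
  have hL0 : (0:ℝ) ≤ (L:ℝ) := Nat.cast_nonneg _
  have hLr : (L:ℝ) * 0.6931471803 ≤ Real.log K := by
    have h1 : 2^L ≤ K := hLdef ▸ Nat.pow_log_le_self 2 (by omega)
    have h2 : ((2:ℝ))^(L:ℕ) ≤ (K:ℝ) := by exact_mod_cast h1
    have h3 : Real.log ((2:ℝ)^(L:ℕ)) ≤ Real.log K := Real.log_le_log (by positivity) h2
    rw [Real.log_pow] at h3
    have h4 : (L:ℝ) * 0.6931471803 ≤ (L:ℝ) * Real.log 2 :=
      mul_le_mul_of_nonneg_left (le_of_lt log2_lb) hL0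
    linarith
  have hLb : (L:ℝ) ≤ 1.4428 * (u + 0.406) := by
    linarith [hLr, hlogK, hlogK0]
  -- psi(sqrt K) bound
  have hpsisq : psi (Nat.sqrt K) ≤ 1.108 * (1.2249 * s^2) + 75 * ((u + 0.406)/2 + 1) := by
    have h1 := psi_ub (Nat.sqrt K)
    have h2 : ((Nat.sqrt K : ℕ) : ℝ) ≤ 1.2249 * s^2 := le_trans hnsq hsqrtK
    have h3 : Real.log ((Nat.sqrt K : ℕ) : ℝ) ≤ (u + 0.406)/2 := by linarith
    linarith
  have hpsisq0 : 0 ≤ psi (Nat.sqrt K) := psi_nonneg _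
  have hgap : (L:ℝ) * psi (Nat.sqrt K)
      ≤ 1.4428 * (u + 0.406) * (1.108 * (1.2249 * s^2) + 75 * ((u + 0.406)/2 + 1)) := by
    apply mul_le_mul hLb hpsisq hpsisq0
    nlinarith
  -- main chain
  have hchain1 : A * K - 4 * Real.log K - 1 ≤ psi K :=
    le_trans (E_lb hK30) (E_le_psi K)
  have hchain2 : psi K ≤ theta N + (L:ℝ) * psi (Nat.sqrt K) := by
    have hst := psi_sub_theta K
    rw [htheta] at hst
    rw [hLdef]
    linarith
  have hchain3 : theta N ≤ 1.108 * N + 75 * (u + 1) :=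
    le_trans (theta_le_psi N) (psi_ub N)
  have hAK : (0.9212:ℝ) * ((1.5:ℝ) * N - 1) ≤ A * K := by
    have h0 : (0:ℝ) ≤ (K:ℝ) := le_of_lt hKpos
    nlinarith [A_lb, hKr, hNr]
  have hfinal := final_num hs hu0 hu
  rw [hs4] at hfinal
  linarith [hchain1, hchain2, hchain3, hAK, hgap, hlogK, hfinal]


lemma nagura {n : ℕ} (hn : 29 ≤ n) : ∃ r, r.Prime ∧ n < r ∧ 2*r < 3*n := by
  rcases le_or_gt 100000 n with h | h
  · exact exists_prime_large h
  rcases lt_or_ge n 43 with h1 | h1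
  · exact ⟨43, by norm_num, h1, by omega⟩
  rcases lt_or_ge n 61 with h1 | h1
  · exact ⟨61, by norm_num, h1, by omega⟩
  rcases lt_or_ge n 89 with h1 | h1
  · exact ⟨89, by norm_num, h1, by omega⟩
  rcases lt_or_ge n 131 with h1 | h1
  · exact ⟨131, by norm_num, h1, by omega⟩
  rcases lt_or_ge n 193 with h1 | h1
  · exact ⟨193, by norm_num, h1, by omega⟩
  rcases lt_or_ge n 283 with h1 | h1
  · exact ⟨283, by norm_num, h1, by omega⟩
  rcases lt_or_ge n 421 with h1 | h1
  · exact ⟨421, by norm_num, h1, by omega⟩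
  rcases lt_or_ge n 631 with h1 | h1
  · exact ⟨631, by norm_num, h1, by omega⟩
  rcases lt_or_ge n 941 with h1 | h1
  · exact ⟨941, by norm_num, h1, by omega⟩
  rcases lt_or_ge n 1409 with h1 | h1
  · exact ⟨1409, by norm_num, h1, by omega⟩
  rcases lt_or_ge n 2113 with h1 | h1
  · exact ⟨2113, by norm_num, h1, by omega⟩
  rcases lt_or_ge n 3169 with h1 | h1
  · exact ⟨3169, by norm_num, h1, by omega⟩
  rcases lt_or_ge n 4751 with h1 | h1
  · exact ⟨4751, by norm_num, h1, by omega⟩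
  rcases lt_or_ge n 7121 with h1 | h1
  · exact ⟨7121, by norm_num, h1, by omega⟩
  rcases lt_or_ge n 10667 with h1 | h1
  · exact ⟨10667, by norm_num, h1, by omega⟩
  rcases lt_or_ge n 15991 with h1 | h1
  · exact ⟨15991, by norm_num, h1, by omega⟩
  rcases lt_or_ge n 23981 with h1 | h1
  · exact ⟨23981, by norm_num, h1, by omega⟩
  rcases lt_or_ge n 35969 with h1 | h1
  · exact ⟨35969, by norm_num, h1, by omega⟩
  rcases lt_or_ge n 53951 with h1 | h1
  · exact ⟨53951, by norm_num, h1, by omega⟩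
  rcases lt_or_ge n 80923 with h1 | h1
  · exact ⟨80923, by norm_num, h1, by omega⟩
  exact ⟨121379, by norm_num, by omega, by omega⟩


end NaguraAux


theorem exists_prime_and_pow (m : ℕ) (hm : 0 < m) (n : ℕ) (hn : 0 < n)
    (h : (n : ℝ) > 14.4 / ((2 : ℝ) ^ ((1 : ℝ) / (m : ℝ)) - (1.5 : ℝ) ^ ((1 : ℝ) / (m : ℝ))) ^ m) :
    ∃ (r : ℕ) (a : ℕ), r.Prime ∧ 0 < a ∧
      2 * n < 2 * r ∧ 2 * r < 3 * n ∧ 3 * n < 2 * a ^ m ∧ 2 * a ^ m < 4 * n := by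
  have hmR : (0:ℝ) < (m:ℝ) := by exact_mod_cast hm
  set p : ℝ := (1:ℝ)/(m:ℝ) with hp_def
  have hp0 : 0 < p := by positivity
  have hp1 : p ≤ 1 := by
    rw [hp_def, div_le_one hmR]
    exact_mod_cast hm
  have hpm : p * m = 1 := by
    rw [hp_def]; field_simp
  set δ : ℝ := (2:ℝ)^p - (1.5:ℝ)^p with hδ_def
  have hδpos : 0 < δ := by
    rw [hδ_def, sub_pos]
    exact Real.rpow_lt_rpow (by norm_num) (by norm_num) hp0
  have hδm_pos : (0:ℝ) < δ^m := by positivity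
  -- δ^m ≤ 1/2 via subadditivity of rpow
  have hsub : (2:ℝ)^p ≤ (1.5:ℝ)^p + (0.5:ℝ)^p := by
    have hnn := NNReal.rpow_add_le_add_rpow (3/2 : ℝ≥0) (1/2 : ℝ≥0) hp0.le hp1
    have h32 : ((3/2 : ℝ≥0) + (1/2 : ℝ≥0)) = (2 : ℝ≥0) := by
      rw [← NNReal.coe_inj]; push_cast; norm_num
    rw [h32] at hnn
    have hc : ((2:ℝ≥0):ℝ)^p ≤ ((3/2:ℝ≥0):ℝ)^p + ((1/2:ℝ≥0):ℝ)^p := by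
      exact_mod_cast hnn
    have e1 : ((3/2:ℝ≥0):ℝ) = (1.5:ℝ) := by norm_num
    have e2 : ((1/2:ℝ≥0):ℝ) = (0.5:ℝ) := by norm_num
    have e3 : ((2:ℝ≥0):ℝ) = (2:ℝ) := by norm_num
    rw [e1, e2, e3] at hc
    exact hc
  have hδle : δ ≤ (0.5:ℝ)^p := by rw [hδ_def]; linarith
  have hδm : δ^m ≤ 1/2 := by
    have h1 : δ^m ≤ ((0.5:ℝ)^p)^m := pow_le_pow_left₀ hδpos.le hδle m
    have h2 : ((0.5:ℝ)^p)^m = (0.5:ℝ) := by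
      rw [← Real.rpow_natCast ((0.5:ℝ)^p) m, ← Real.rpow_mul (by norm_num), hpm,
        Real.rpow_one]
    rw [h2] at h1
    linarith
  -- n ≥ 29
  have h288 : (28.8:ℝ) < (n:ℝ) := by
    have h1 : (14.4:ℝ)/δ^m < n := h
    have h2 : (28.8:ℝ) ≤ 14.4/δ^m := by
      rw [le_div_iff₀ hδm_pos]
      linarith
    linarith
  have hn29 : 29 ≤ n := by
    by_contra hc
    push_neg at hc
    have : (n:ℝ) ≤ 28 := by exact_mod_cast Nat.le_of_lt_succ hc
    linarith
  -- prime part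
  obtain ⟨r, hrp, hrn, hr3⟩ := NaguraAux.nagura hn29
  -- power part
  have hnpos : (0:ℝ) < (n:ℝ) := by positivity
  set L : ℝ := ((1.5:ℝ) * n)^p with hL_def
  set R : ℝ := ((2:ℝ) * n)^p with hR_def
  have hL0 : 0 ≤ L := by positivity
  have hdiff : R - L = (n:ℝ)^p * δ := by
    rw [hR_def, hL_def, Real.mul_rpow (by norm_num) hnpos.le,
      Real.mul_rpow (by norm_num) hnpos.le, hδ_def]
    ring
  have hgt1 : 1 < (n:ℝ)^p * δ := by
    have hmul : (14.4:ℝ) < (n:ℝ) * δ^m := by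
      rw [gt_iff_lt, div_lt_iff₀ hδm_pos] at h
      linarith
    by_contra hc
    push_neg at hc
    have h0 : (0:ℝ) ≤ (n:ℝ)^p * δ := by positivity
    have h1 : ((n:ℝ)^p * δ)^m ≤ 1 := pow_le_one₀ h0 hc
    have h2 : ((n:ℝ)^p * δ)^m = (n:ℝ) * δ^m := by
      rw [mul_pow, ← Real.rpow_natCast ((n:ℝ)^p) m, ← Real.rpow_mul hnpos.le, hpm,
        Real.rpow_one]
    rw [h2] at h1
    linarith
  obtain ⟨a, ha_def⟩ : ∃ a : ℕ, a = ⌊L⌋₊ + 1 := ⟨_, rfl⟩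
  have ha0 : 0 < a := by omega
  have haL : L < (a:ℕ) := by
    rw [ha_def]
    push_cast
    exact Nat.lt_floor_add_one L
  have haR : (a:ℝ) < R := by
    have h1 : (⌊L⌋₊ : ℝ) ≤ L := Nat.floor_le hL0
    rw [ha_def]
    push_cast
    linarith [hdiff, hgt1]
  have hLm : L^m = 1.5 * n := by
    rw [hL_def, ← Real.rpow_natCast (((1.5:ℝ)*n)^p) m, ← Real.rpow_mul (by positivity), hpm,
      Real.rpow_one]
  have hRm : R^m = 2 * n := by
    rw [hR_def, ← Real.rpow_natCast (((2:ℝ)*n)^p) m, ← Real.rpow_mul (by positivity), hpm,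
      Real.rpow_one]
  have ham_lb : 1.5 * n < ((a:ℝ))^m := by
    rw [← hLm]
    exact pow_lt_pow_left₀ haL hL0 (by omega)
  have ham_ub : ((a:ℝ))^m < 2 * n := by
    rw [← hRm]
    exact pow_lt_pow_left₀ haR (by positivity) (by omega)
  refine ⟨r, a, hrp, ha0, by omega, by omega, ?_, ?_⟩
  · have : (3:ℝ) * n < 2 * (a:ℝ)^m := by linarith
    have h2 : ((3 * n : ℕ) : ℝ) < ((2 * a^m : ℕ) : ℝ) := by push_cast; linarith
    exact_mod_cast h2
  · have : (2:ℝ) * (a:ℝ)^m < 4 * n := by linarith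
    have h2 : ((2 * a^m : ℕ) : ℝ) < ((4 * n : ℕ) : ℝ) := by push_cast; linarith
    exact_mod_cast h2
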